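/- Let Γ be an ample group over the Cantor space X acting minimally, let K ⊆ X be Γ-étale, and let (𝒜, Δ) be a finite unit system with Δ ≤ Γ. Then there exist a finite unit system (𝒜', Δ') which is K-compatible, with 𝒜' ⊇ 𝒜 and Δ ≤ Δ' ≤ Γ. -/

import Mathlib

open MeasureTheory Set

/-- The group structure on self-homeomorphisms of a topological space,
with `(f * g) x = f (g x)`. -/
instance Homeomorph.instGroupSelf {Y : Type*} [TopologicalSpace Y] : Group (Y ≃ₜ Y) where
  mul f g := g.trans f
  one := Homeomorph.refl Y
  inv := Homeomorph.symm
  mul_assoc := fun _ _ _ => rfl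
  one_mul := fun _ => by ext x; rfl
  mul_one := fun _ => by ext x; rfl
  inv_mul_cancel := fun a => by ext x; exact a.symm_apply_apply x

/-- `Y` is a Cantor space: nonempty, compact, metrizable, totally disconnected and perfect. -/
def IsCantorSpace (Y : Type*) [TopologicalSpace Y] : Prop :=
  Nonempty Y ∧ CompactSpace Y ∧ TopologicalSpace.MetrizableSpace Y ∧ TotallyDisconnectedSpace Y ∧
    Perfect (Set.univ : Set Y)

/-- `g` coincides piecewise, on a finite clopen partition of the space, with elements of `Γ`. -/
def PiecewiseIn {Y : Type*} [TopologicalSpace Y] (Γ : Subgroup (Y ≃ₜ Y)) (g : Y ≃ₜ Y) : Prop :=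
  ∃ (n : ℕ) (U : Fin n → Set Y) (γ : Fin n → (Y ≃ₜ Y)),
    (∀ i, IsClopen (U i)) ∧ (∀ i, γ i ∈ Γ) ∧
    Pairwise (Function.onFun Disjoint U) ∧ (⋃ i, U i) = Set.univ ∧
    (∀ i, ∀ x ∈ U i, g x = γ i x)

/-- A subgroup of `Homeo(Y)` is full if it contains every homeomorphism which coincides
piecewise, on a finite clopen partition, with elements of the subgroup. -/
def IsFullGroup {Y : Type*} [TopologicalSpace Y] (Γ : Subgroup (Y ≃ₜ Y)) : Prop :=
  ∀ g : Y ≃ₜ Y, PiecewiseIn Γ g → g ∈ Γ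

/-- Every finitely generated subgroup is finite. -/
def IsLocallyFiniteGroup {Y : Type*} [TopologicalSpace Y] (Γ : Subgroup (Y ≃ₜ Y)) : Prop :=
  ∀ S : Finset (Y ≃ₜ Y), (S : Set (Y ≃ₜ Y)) ⊆ (Γ : Set (Y ≃ₜ Y)) →
    ((Subgroup.closure (S : Set (Y ≃ₜ Y)) : Subgroup (Y ≃ₜ Y)) : Set (Y ≃ₜ Y)).Finite

/-- An ample group over `Y`: countable, locally finite, full, with clopen fixed-point sets. -/
def IsAmpleGroup {Y : Type*} [TopologicalSpace Y] (Γ : Subgroup (Y ≃ₜ Y)) : Prop :=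
  (Γ : Set (Y ≃ₜ Y)).Countable ∧ IsLocallyFiniteGroup Γ ∧ IsFullGroup Γ ∧
    ∀ γ ∈ Γ, IsClopen {x : Y | γ x = x}

/-- The action of `Γ` is minimal: every orbit is dense. -/
def IsMinimalGroup {Y : Type*} [TopologicalSpace Y] (Γ : Subgroup (Y ≃ₜ Y)) : Prop :=
  ∀ x : Y, Dense {y : Y | ∃ γ ∈ Γ, γ x = y}

/-- `M(Γ)`: the set of `Γ`-invariant Borel probability measures. -/
def InvProbMeasures {Y : Type*} [TopologicalSpace Y] [MeasurableSpace Y]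
    (Γ : Subgroup (Y ≃ₜ Y)) : Set (Measure Y) :=
  {μ | IsProbabilityMeasure μ ∧ ∀ γ ∈ Γ, Measure.map (γ : Y → Y) μ = μ}

/-- `A ∼_Γ B`: some element of `Γ` maps `A` onto `B`. -/
def ClopenEquiv {Y : Type*} [TopologicalSpace Y] (Γ : Subgroup (Y ≃ₜ Y)) (A B : Set Y) : Prop :=
  ∃ γ ∈ Γ, γ '' A = B

/-- `K` is `Γ`-thin: null for every `Γ`-invariant Borel probability measure. -/
def IsThin {Y : Type*} [TopologicalSpace Y] [MeasurableSpace Y]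
    (Γ : Subgroup (Y ≃ₜ Y)) (K : Set Y) : Prop :=
  ∀ μ ∈ InvProbMeasures Γ, μ K = 0

/-- `A` is a subset of `K` which is clopen in the subspace topology of `K`. -/
def IsClopenIn {Y : Type*} [TopologicalSpace Y] (K A : Set Y) : Prop :=
  A ⊆ K ∧ IsClopen ((Subtype.val ⁻¹' A) : Set K)

/-- `K` is `Γ`-étale: `K` is closed and for every `γ ∈ Γ` and every `A ⊆ K` clopen in `K`,
`γ(A) ∩ K` is clopen in `K`. -/
def IsEtale {Y : Type*} [TopologicalSpace Y] (Γ : Subgroup (Y ≃ₜ Y)) (K : Set Y) : Prop :=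
  IsClosed K ∧ ∀ γ ∈ Γ, ∀ A : Set Y, IsClopenIn K A → IsClopenIn K ((γ : Y ≃ₜ Y) '' A ∩ K)

/-- `K` is `Γ`-malleable: closed, `Γ`-thin and `Γ`-étale. -/
def IsMalleable {Y : Type*} [TopologicalSpace Y] [MeasurableSpace Y]
    (Γ : Subgroup (Y ≃ₜ Y)) (K : Set Y) : Prop :=
  IsClosed K ∧ IsThin Γ K ∧ IsEtale Γ K

open scoped Classical in
/-- The induced map `γ_K : K → K`:  `γ_K x = γ x` if `γ x ∈ K`, and `γ_K x = x` otherwise. -/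
noncomputable def inducedMap {Y : Type*} [TopologicalSpace Y] (γ : Y ≃ₜ Y) (K : Set Y) :
    K → K :=
  fun x => if h : (γ (x : Y)) ∈ K then ⟨γ (x : Y), h⟩ else x

/-- `Γ_K`: the set of homeomorphisms of `K` which are restrictions of elements of `Γ`
mapping `K` onto itself. -/
def restrGroup {Y : Type*} [TopologicalSpace Y] (Γ : Subgroup (Y ≃ₜ Y)) (K : Set Y) :
    Set ((K : Set Y) ≃ₜ (K : Set Y)) :=
  {g | ∃ γ ∈ Γ, (γ : Y ≃ₜ Y) '' K = K ∧ ∀ x : K, (g x : Y) = γ (x : Y)}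

/-- The orbit equivalence relation `R_Γ` of a subgroup of `Homeo(Y)`. -/
def orbitRelOf {Y : Type*} [TopologicalSpace Y] (Γ : Subgroup (Y ≃ₜ Y)) (x y : Y) : Prop :=
  ∃ γ ∈ Γ, γ x = y

/-- `R_Γ(K, Δ)`: the smallest equivalence relation containing `R_Γ` together with all pairs
`(x, δ x)` for `x ∈ K` and `δ ∈ Δ`, where `Δ` is a subgroup of `Homeo(K)`. -/
def extOrbitRel {Y : Type*} [TopologicalSpace Y] (Γ : Subgroup (Y ≃ₜ Y)) (K : Set Y)
    (Δ : Set ((K : Set Y) ≃ₜ (K : Set Y))) (x y : Y) : Prop :=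
  Relation.EqvGen (fun a b => orbitRelOf Γ a b ∨ ∃ ha : a ∈ K, ∃ δ ∈ Δ, ((δ ⟨a, ha⟩ : K) : Y) = b) x y

/-- Two relations on `Y` are orbit equivalent if some homeomorphism of `Y` carries one
to the other. -/
def OrbitEquivalent {Y : Type*} [TopologicalSpace Y] (R S : Y → Y → Prop) : Prop :=
  ∃ g : Y ≃ₜ Y, ∀ x y : Y, R x y ↔ S (g x) (g y)

/-- A unit system `(𝒜, Δ)`: a Boolean subalgebra `𝒜` of the clopen subsets of `Y`
together with a subgroup `Δ ≤ Homeo(Y)` satisfying the compatibility conditions. -/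
structure IsUnitSystem {Y : Type*} [TopologicalSpace Y] (𝒜 : Set (Set Y))
    (Δ : Subgroup (Y ≃ₜ Y)) : Prop where
  clopen : ∀ A ∈ 𝒜, IsClopen A
  empty_mem : (∅ : Set Y) ∈ 𝒜
  compl_mem : ∀ A ∈ 𝒜, Aᶜ ∈ 𝒜
  inter_mem : ∀ A ∈ 𝒜, ∀ B ∈ 𝒜, A ∩ B ∈ 𝒜
  maps : ∀ δ ∈ Δ, ∀ A ∈ 𝒜, (δ : Y ≃ₜ Y) '' A ∈ 𝒜
  eval_injective : ∀ δ ∈ Δ, (∀ A ∈ 𝒜, (δ : Y ≃ₜ Y) '' A = A) → δ = 1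
  fixed_mem : ∀ δ ∈ Δ, {x : Y | δ x = x} ∈ 𝒜
  full : ∀ g : Y ≃ₜ Y, (∃ (n : ℕ) (U : Fin n → Set Y) (γ : Fin n → (Y ≃ₜ Y)),
      (∀ i, U i ∈ 𝒜) ∧ (∀ i, γ i ∈ Δ) ∧ Pairwise (Function.onFun Disjoint U) ∧
      (⋃ i, U i) = Set.univ ∧ (∀ i, ∀ x ∈ U i, g x = γ i x)) → g ∈ Δ

/-- An atom of a (finite) Boolean algebra of sets. -/
def IsAtomOf {Y : Type*} (𝒜 : Set (Set Y)) (A : Set Y) : Prop :=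
  A ∈ 𝒜 ∧ A ≠ ∅ ∧ ∀ B ∈ 𝒜, B ⊆ A → B = ∅ ∨ B = A

/-- A finite unit system `(𝒜, Δ)` is `K`-compatible if whenever an element of `Δ` maps an
atom `A` to an atom `B` and both meet `K`, it maps `K ∩ A` onto `K ∩ B`. -/
def IsKCompatible {Y : Type*} [TopologicalSpace Y] (K : Set Y) (𝒜 : Set (Set Y))
    (Δ : Subgroup (Y ≃ₜ Y)) : Prop :=
  ∀ A B : Set Y, IsAtomOf 𝒜 A → IsAtomOf 𝒜 B → ∀ δ ∈ Δ, (δ : Y ≃ₜ Y) '' A = B →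
    (K ∩ A).Nonempty → (K ∩ B).Nonempty → (δ : Y ≃ₜ Y) '' (K ∩ A) = K ∩ B

set_option linter.unusedSectionVars false

section CellMachinery
variable {X : Type*} [TopologicalSpace X]

/-- The "cell" of `x`: points indistinguishable from `x` by members of `G`. -/
def cellOf (G : Set (Set X)) (x : X) : Set X := {y | ∀ S ∈ G, y ∈ S ↔ x ∈ S}

/-- The algebra of `G`-saturated sets. -/
def satAlg (G : Set (Set X)) : Set (Set X) :=
  {A | ∀ x y : X, y ∈ cellOf G x → (x ∈ A ↔ y ∈ A)}

variable {G : Set (Set X)}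

theorem mem_cellOf_self (x : X) : x ∈ cellOf G x := fun _ _ => Iff.rfl

theorem cellOf_symm {x y : X} (h : y ∈ cellOf G x) : x ∈ cellOf G y :=
  fun S hS => (h S hS).symm

theorem cellOf_eq {x y : X} (h : y ∈ cellOf G x) : cellOf G y = cellOf G x := by
  ext z
  exact ⟨fun hz S hS => (hz S hS).trans (h S hS), fun hz S hS => (hz S hS).trans (h S hS).symm⟩

theorem cell_subset {A : Set X} (hA : A ∈ satAlg G) {x : X} (hx : x ∈ A) :
    cellOf G x ⊆ A := fun _ hy => (hA _ _ hy).mp hx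

theorem cellOf_mem_satAlg (x : X) : cellOf G x ∈ satAlg G := by
  intro a b hb
  constructor
  · intro ha; exact (cellOf_eq ha) ▸ hb
  · intro hb'; exact (cellOf_eq hb') ▸ cellOf_symm hb

theorem subset_satAlg : G ⊆ satAlg G := fun S hS _ _ hy => (hy S hS).symm

theorem cell_subset_of_mem {S : Set X} (hS : S ∈ G) {x : X} (hx : x ∈ S) :
    cellOf G x ⊆ S := fun _ hy => (hy S hS).mpr hx

theorem cell_disjoint_of_not_mem {S : Set X} (hS : S ∈ G) {x : X} (hx : x ∉ S) :
    ∀ y ∈ cellOf G x, y ∉ S := fun _ hy hyS => hx ((hy S hS).mp hyS)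

theorem cellOf_anti {G' : Set (Set X)} (h : G' ⊆ G) (x : X) : cellOf G x ⊆ cellOf G' x :=
  fun _ hy S hS => hy S (h hS)

theorem satAlg_of_forall {A : Set X} (h : ∀ x y : X, y ∈ cellOf G x → x ∈ A → y ∈ A) :
    A ∈ satAlg G := fun x y hy => ⟨h x y hy, h y x (cellOf_symm hy)⟩

theorem empty_mem_satAlg : (∅ : Set X) ∈ satAlg G := fun _ _ _ => Iff.rfl

theorem compl_mem_satAlg {A : Set X} (hA : A ∈ satAlg G) : Aᶜ ∈ satAlg G :=
  fun x y hy => not_congr (hA x y hy)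

theorem inter_mem_satAlg {A B : Set X} (hA : A ∈ satAlg G) (hB : B ∈ satAlg G) :
    A ∩ B ∈ satAlg G := fun x y hy => and_congr (hA x y hy) (hB x y hy)

theorem isClopen_cellOf (hGfin : G.Finite) (hGcl : ∀ S ∈ G, IsClopen S) (x : X) :
    IsClopen (cellOf G x) := by
  classical
  have : cellOf G x = ⋂ S ∈ G, if x ∈ S then S else Sᶜ := by
    ext y
    simp only [cellOf, mem_setOf_eq, mem_iInter]
    constructor
    · intro h S hS
      by_cases hx : x ∈ S
      · rw [if_pos hx]; exact (h S hS).mpr hx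
      · rw [if_neg hx]; exact fun hyS => hx ((h S hS).mp hyS)
    · intro h S hS
      have := h S hS
      by_cases hx : x ∈ S
      · rw [if_pos hx] at this; exact ⟨fun _ => hx, fun _ => this⟩
      · rw [if_neg hx] at this
        exact ⟨fun hyS => absurd hyS this, fun hxS => absurd hxS hx⟩
  rw [this]
  refine hGfin.isClopen_biInter fun S hS => ?_
  by_cases hx : x ∈ S
  · rw [if_pos hx]; exact hGcl S hS
  · rw [if_neg hx]; exact (hGcl S hS).compl

theorem isOpen_of_mem_satAlg (hGfin : G.Finite) (hGcl : ∀ S ∈ G, IsClopen S) {A : Set X}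
    (hA : A ∈ satAlg G) : IsOpen A := by
  have : A = ⋃ x ∈ A, cellOf G x := by
    ext z
    constructor
    · intro hz; exact mem_biUnion hz (mem_cellOf_self z)
    · rintro hz
      simp only [mem_iUnion] at hz
      obtain ⟨x, hx, hzx⟩ := hz
      exact (hA x z hzx).mp hx
  rw [this]
  exact isOpen_biUnion fun x _ => (isClopen_cellOf hGfin hGcl x).2

theorem isClopen_of_mem_satAlg (hGfin : G.Finite) (hGcl : ∀ S ∈ G, IsClopen S) {A : Set X}
    (hA : A ∈ satAlg G) : IsClopen A :=
  ⟨isOpen_compl_iff.mp (isOpen_of_mem_satAlg hGfin hGcl (compl_mem_satAlg hA)),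
    isOpen_of_mem_satAlg hGfin hGcl hA⟩

theorem satAlg_finite (hGfin : G.Finite) : (satAlg G).Finite := by
  haveI := hGfin.fintype
  apply Set.Finite.of_finite_image (f := fun A : Set X =>
    {f : ↥G → Prop | ∃ x ∈ A, ∀ S : ↥G, (x ∈ (S : Set X)) ↔ f S})
  · exact Set.toFinite _
  · intro A hA B hB hEq
    have key : ∀ {A B : Set X}, A ∈ satAlg G → B ∈ satAlg G →
        {f : ↥G → Prop | ∃ x ∈ A, ∀ S : ↥G, (x ∈ (S : Set X)) ↔ f S} =
        {f : ↥G → Prop | ∃ x ∈ B, ∀ S : ↥G, (x ∈ (S : Set X)) ↔ f S} → A ⊆ B := by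
      intro A B _ hB hEq x hx
      have : (fun S : ↥G => (x ∈ (S : Set X))) ∈
          {f : ↥G → Prop | ∃ x ∈ A, ∀ S : ↥G, (x ∈ (S : Set X)) ↔ f S} :=
        ⟨x, hx, fun S => Iff.rfl⟩
      rw [hEq] at this
      obtain ⟨y, hy, hyf⟩ := this
      have hxy : x ∈ cellOf G y := fun S hS => (hyf ⟨S, hS⟩).symm
      exact (hB y x hxy).mp hy
    exact subset_antisymm (key hA hB hEq) (key hB hA hEq.symm)

end CellMachinery

section MoreAux
variable {X : Type*} [TopologicalSpace X]

theorem atom_eq_cell {G : Set (Set X)} {A : Set X} (hatom : IsAtomOf (satAlg G) A)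
    {x : X} (hx : x ∈ A) : A = cellOf G x := by
  rcases hatom.2.2 (cellOf G x) (cellOf_mem_satAlg x) (cell_subset hatom.1 hx) with h | h
  · exact absurd (h ▸ mem_cellOf_self x) (notMem_empty x)
  · exact h.symm

theorem image_cellOf {G : Set (Set X)} (δ : X ≃ₜ X)
    (h1 : ∀ S ∈ G, ⇑δ '' S ∈ G) (h2 : ∀ S ∈ G, ⇑δ.symm '' S ∈ G) (x : X) :
    ⇑δ '' cellOf G x = cellOf G (δ x) := by
  ext z
  rw [show ⇑δ '' cellOf G x = ⇑δ.symm ⁻¹' cellOf G x from δ.image_eq_preimage_symm _]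
  constructor
  · intro h S hS
    have hS' := h2 S hS
    have e1 : z ∈ S ↔ δ.symm z ∈ ⇑δ.symm '' S := (δ.symm.injective.mem_set_image).symm
    have e2 : x ∈ ⇑δ.symm '' S ↔ δ x ∈ S := by
      rw [show ⇑δ.symm '' S = ⇑δ ⁻¹' S from δ.symm.image_eq_preimage_symm _]; exact Iff.rfl
    exact e1.trans ((h _ hS').trans e2)
  · intro h S hS
    have hS' := h1 S hS
    have e1 : δ.symm z ∈ S ↔ z ∈ ⇑δ '' S := by
      rw [show ⇑δ '' S = ⇑δ.symm ⁻¹' S from δ.image_eq_preimage_symm _]; exact Iff.rfl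
    have e2 : δ x ∈ ⇑δ '' S ↔ x ∈ S := δ.injective.mem_set_image
    exact e1.trans ((h _ hS').trans e2)

theorem exists_clopen_between [CompactSpace X] [T2Space X] [TotallyDisconnectedSpace X]
    {s U : Set X} (hs : IsCompact s) (hU : IsOpen U) (hsU : s ⊆ U) :
    ∃ V, IsClopen V ∧ s ⊆ V ∧ V ⊆ U := by
  have h : ∀ x ∈ s, ∃ V : Set X, IsClopen V ∧ x ∈ V ∧ V ⊆ U := fun x hx =>
    compact_exists_isClopen_in_isOpen hU (hsU hx)
  choose! V hV1 hV2 hV3 using h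
  obtain ⟨b, hbs, hbfin, hcov⟩ := hs.elim_finite_subcover_image
    (fun x (hx : x ∈ s) => (hV1 x hx).2) (fun x hx => mem_biUnion hx (hV2 x hx))
  exact ⟨⋃ i ∈ b, V i, hbfin.isClopen_biUnion fun i hi => hV1 i (hbs hi), hcov,
    iUnion₂_subset fun i hi => hV3 i (hbs hi)⟩

theorem clopen_extension [CompactSpace X] [T2Space X] [TotallyDisconnectedSpace X]
    {K L : Set X} (hK : IsClosed K) (hL : IsClopenIn K L) :
    ∃ C, IsClopen C ∧ C ∩ K = L := by
  obtain ⟨hLK, hcl⟩ := hL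
  have hLclosed : IsClosed L := by
    have := hK.isClosedEmbedding_subtypeVal.isClosedMap _ hcl.1
    rwa [Subtype.image_preimage_coe, inter_eq_self_of_subset_right hLK] at this
  have hKLclosed : IsClosed (K \ L) := by
    have := hK.isClosedEmbedding_subtypeVal.isClosedMap _ hcl.compl.1
    rw [show ((Subtype.val ⁻¹' L : Set K)ᶜ) = (Subtype.val ⁻¹' Lᶜ : Set K) from rfl,
      Subtype.image_preimage_coe] at this
    rwa [diff_eq]
  obtain ⟨C, hC, hLC, hCU⟩ := exists_clopen_between hLclosed.isCompact
    hKLclosed.isOpen_compl (fun x hx => fun hxd => hxd.2 hx)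
  refine ⟨C, hC, subset_antisymm ?_ (subset_inter hLC hLK)⟩
  rintro x ⟨hxC, hxK⟩
  by_contra hxL
  exact hCU hxC ⟨hxK, hxL⟩

/-- The group of homeomorphisms piecewise given by `Γ0` on cells of `G`. -/
def pieceGroup (Γ0 : Subgroup (X ≃ₜ X)) (G : Set (Set X))
    (hinv : ∀ δ : X ≃ₜ X, δ ∈ Γ0 → ∀ S ∈ G, ⇑δ '' S ∈ G) : Subgroup (X ≃ₜ X) where
  carrier := {g | ∀ x : X, ∃ δ : X ≃ₜ X, δ ∈ Γ0 ∧ Set.EqOn ⇑g ⇑δ (cellOf G x)}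
  one_mem' := fun x => ⟨1, one_mem _, fun y _ => rfl⟩
  mul_mem' := by
    rintro g h hg hh x
    obtain ⟨δ, hδ, heq⟩ := hh x
    obtain ⟨δ', hδ', heq'⟩ := hg (δ x)
    refine ⟨δ' * δ, mul_mem hδ' hδ, fun y hy => ?_⟩
    have h1 : (g * h) y = g (h y) := rfl
    have h2 : (δ' * δ) y = δ' (δ y) := rfl
    rw [h1, h2, heq hy, heq' ?_]
    have : ⇑δ '' cellOf G x = cellOf G (δ x) := image_cellOf δ (hinv δ hδ)
      (fun S hS => hinv δ⁻¹ (inv_mem hδ) S hS) x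
    exact this ▸ Set.mem_image_of_mem _ hy
  inv_mem' := by
    rintro g hg x
    obtain ⟨δ, hδ, heq⟩ := hg (g.symm x)
    have himg : ⇑g '' cellOf G (g.symm x) = cellOf G x := by
      rw [Set.image_congr heq, image_cellOf δ (hinv δ hδ)
        (fun S hS => hinv δ⁻¹ (inv_mem hδ) S hS), ← heq (mem_cellOf_self _),
        g.apply_symm_apply]
    refine ⟨δ⁻¹, inv_mem hδ, fun y hy => ?_⟩
    rw [← himg] at hy
    obtain ⟨w, hw, hyw⟩ := hy
    have h1 : ⇑g w = ⇑δ w := heq hw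
    show g.symm y = δ.symm y
    rw [← hyw, g.symm_apply_apply, h1, δ.symm_apply_apply]

end MoreAux

/-- any finite unit system inside `Γ` refines to a `K`-compatible one. -/
theorem refining_to_compatible {X : Type*} [TopologicalSpace X]
    (hX : IsCantorSpace X) (Γ : Subgroup (X ≃ₜ X)) (hample : IsAmpleGroup Γ)
    (hmin : IsMinimalGroup Γ) (K : Set X) (hK : IsEtale Γ K)
    (𝒜 : Set (Set X)) (Δ : Subgroup (X ≃ₜ X)) (hus : IsUnitSystem 𝒜 Δ)
    (hfin : 𝒜.Finite) (hΔΓ : Δ ≤ Γ) :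
    ∃ (𝒜' : Set (Set X)) (Δ' : Subgroup (X ≃ₜ X)),
      IsUnitSystem 𝒜' Δ' ∧ 𝒜'.Finite ∧ IsKCompatible K 𝒜' Δ' ∧
      𝒜 ⊆ 𝒜' ∧ Δ ≤ Δ' ∧ Δ' ≤ Γ := by
  classical
  obtain ⟨hne, hcomp, hmetr, htd, hperf⟩ := hX
  haveI := hcomp; haveI := hmetr; haveI := htd
  obtain ⟨hKclosed, hKetale⟩ := hK
  -- `Δ` is finite
  have hΔfin : ((Δ : Set (X ≃ₜ X))).Finite := by
    haveI := hfin.fintype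
    apply Set.Finite.of_finite_image
      (f := fun δ : X ≃ₜ X => fun A : ↥𝒜 => ⇑δ '' (A : Set X))
    · apply Set.Finite.subset (Set.finite_range
        (fun h : ↥𝒜 → ↥𝒜 => fun A : ↥𝒜 => ((h A : Set X))))
      rintro _ ⟨δ, hδ, rfl⟩
      exact ⟨fun A => ⟨⇑δ '' (A : Set X), hus.maps δ hδ A A.2⟩, rfl⟩
    · intro δ₁ h₁ δ₂ h₂ hEq
      have h : ∀ A ∈ 𝒜, ⇑δ₁ '' A = ⇑δ₂ '' A := fun A hA => congrFun hEq ⟨A, hA⟩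
      have h1 : δ₂⁻¹ * δ₁ = 1 := by
        apply hus.eval_injective _ (mul_mem (inv_mem h₂) h₁)
        intro A hA
        have hc : ⇑(δ₂⁻¹ * δ₁) = ⇑δ₂.symm ∘ ⇑δ₁ := rfl
        rw [hc, Set.image_comp, h A hA]
        exact δ₂.toEquiv.symm_image_image A
      exact (inv_mul_eq_one.mp h1).symm
  have himgclopen : ∀ (δ : X ≃ₜ X) (S : Set X), IsClopen S → IsClopen (⇑δ '' S) := by
    intro δ S hS
    rw [show ⇑δ '' S = ⇑δ.symm ⁻¹' S from δ.toEquiv.image_eq_preimage_symm S]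
    exact hS.preimage δ.symm.continuous
  have hΓfix : ∀ δ : X ≃ₜ X, δ ∈ Δ → IsClopen {x : X | δ x = x} :=
    fun δ hδ => hus.clopen _ (hus.fixed_mem δ hδ)
  -- clopen extensions of the sets `K ∩ δ⁻¹(K)`
  have hCex : ∀ δ : X ≃ₜ X, δ ∈ Δ → ∃ C, IsClopen C ∧ C ∩ K = K ∩ ⇑δ ⁻¹' K := by
    intro δ hδ
    have h1 : IsClopenIn K ((⇑(δ⁻¹ : X ≃ₜ X) '' K) ∩ K) := by
      refine hKetale δ⁻¹ (inv_mem (hΔΓ hδ)) K ⟨subset_rfl, ?_⟩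
      have : (Subtype.val ⁻¹' K : Set K) = univ := eq_univ_iff_forall.mpr fun x => x.2
      rw [this]; exact isClopen_univ
    have h2 : (⇑(δ⁻¹ : X ≃ₜ X) '' K) ∩ K = K ∩ ⇑δ ⁻¹' K := by
      rw [show ⇑(δ⁻¹ : X ≃ₜ X) '' K = ⇑δ ⁻¹' K from
        (Homeomorph.image_symm δ ▸ rfl : ⇑δ.symm '' K = ⇑δ ⁻¹' K), inter_comm]
    obtain ⟨C, hC1, hC2⟩ := clopen_extension hKclosed h1
    exact ⟨C, hC1, by rw [hC2, h2]⟩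
  choose! Cfun hCfun1 hCfun2 using hCex
  -- small clopen sets moved off themselves
  have hvex : ∀ (δ : X ≃ₜ X) (x : X), δ x ≠ x →
      ∃ V, IsClopen V ∧ x ∈ V ∧ (⇑δ '' V) ∩ V = ∅ := by
    intro δ x hx
    obtain ⟨U, hU, hxU, hδxU⟩ :=
      exists_isClopen_of_totally_separated (fun h : x = δ x => hx h.symm)
    refine ⟨U ∩ ⇑δ ⁻¹' Uᶜ, hU.inter (hU.compl.preimage δ.continuous), ⟨hxU, hδxU⟩, ?_⟩
    rw [eq_empty_iff_forall_notMem]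
    rintro z ⟨⟨w, hw, rfl⟩, hzV⟩
    exact hw.2 hzV.1
  choose! vfun hv1 hv2 hv3 using hvex
  set myV : (X ≃ₜ X) → X → Set X := fun δ x => if δ x ≠ x then vfun δ x else ∅ with hmyV
  have hmyVcl : ∀ (δ : X ≃ₜ X) (x : X), IsClopen (myV δ x) := by
    intro δ x
    show IsClopen (if δ x ≠ x then vfun δ x else ∅)
    by_cases h : δ x ≠ x
    · rw [if_pos h]; exact hv1 δ x h
    · rw [if_neg h]; exact isClopen_empty
  have hmyVdisj : ∀ (δ : X ≃ₜ X) (x : X), (⇑δ '' myV δ x) ∩ myV δ x = ∅ := by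
    intro δ x
    show (⇑δ '' (if δ x ≠ x then vfun δ x else ∅)) ∩ (if δ x ≠ x then vfun δ x else ∅) = ∅
    by_cases h : δ x ≠ x
    · rw [if_pos h]; exact hv3 δ x h
    · rw [if_neg h, image_empty, empty_inter]
  have htV : ∀ δ : X ≃ₜ X, δ ∈ Δ → ∃ t : Finset X, {x : X | δ x ≠ x} ⊆ ⋃ i ∈ t, myV δ i := by
    intro δ hδ
    have hclosed : IsClosed {x : X | δ x ≠ x} := (hΓfix δ hδ).compl.1
    apply hclosed.isCompact.elim_finite_subcover (fun i : X => myV δ i)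
      (fun i => (hmyVcl δ i).2)
    intro x hx
    have hx' : δ x ≠ x := hx
    have : x ∈ myV δ x := by
      show x ∈ if δ x ≠ x then vfun δ x else ∅
      rw [if_pos hx']; exact hv2 δ x hx'
    exact mem_iUnion.mpr ⟨x, this⟩
  choose! tfun htfun using htV
  set Δc : Set (X ≃ₜ X) := (Δ : Set (X ≃ₜ X)) with hΔc
  set Vset : Set (Set X) := ⋃ δ ∈ Δc, (fun i => myV δ i) '' ↑(tfun δ) with hVset
  set G0 : Set (Set X) := 𝒜 ∪ (Cfun '' Δc) ∪ Vset with hG0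
  set imgCl : Set (Set X) → Set (Set X) := fun H =>
    (fun p : (X ≃ₜ X) × Set X => ⇑p.1 '' p.2) '' (Δc ×ˢ H) with himgCl
  have hsubCl : ∀ H : Set (Set X), H ⊆ imgCl H := by
    intro H S hS
    refine ⟨(1, S), ⟨one_mem Δ, hS⟩, ?_⟩
    show ⇑(1 : X ≃ₜ X) '' S = S
    rw [show ⇑(1 : X ≃ₜ X) = id from rfl, Set.image_id]
  have hClInv : ∀ (H : Set (Set X)) (δ : X ≃ₜ X), δ ∈ Δ → ∀ S ∈ imgCl H,
      ⇑δ '' S ∈ imgCl H := by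
    rintro H δ hδ _ ⟨⟨δ₀, S₀⟩, ⟨hδ₀, hS₀⟩, rfl⟩
    refine ⟨(δ * δ₀, S₀), ⟨mul_mem hδ hδ₀, hS₀⟩, ?_⟩
    show ⇑(δ * δ₀) '' S₀ = ⇑δ '' (⇑δ₀ '' S₀)
    rw [show ⇑(δ * δ₀) = ⇑δ ∘ ⇑δ₀ from rfl, Set.image_comp]
  have hClFin : ∀ H : Set (Set X), H.Finite → (imgCl H).Finite :=
    fun H hH => (hΔfin.prod hH).image _
  have hClClopen : ∀ H : Set (Set X), (∀ S ∈ H, IsClopen S) → ∀ S ∈ imgCl H, IsClopen S := by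
    rintro H hH _ ⟨⟨δ₀, S₀⟩, ⟨hδ₀, hS₀⟩, rfl⟩
    exact himgclopen δ₀ S₀ (hH S₀ hS₀)
  have hClMono : ∀ H H' : Set (Set X), H ⊆ H' → imgCl H ⊆ imgCl H' := by
    rintro H H' hHH' _ ⟨p, ⟨hp1, hp2⟩, rfl⟩
    exact ⟨p, ⟨hp1, hHH' hp2⟩, rfl⟩
  have hG0fin : G0.Finite := by
    refine (Set.Finite.union (hfin.union (hΔfin.image Cfun)) ?_)
    exact Set.Finite.biUnion hΔfin fun δ _ => (tfun δ).finite_toSet.image _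
  have hG0cl : ∀ S ∈ G0, IsClopen S := by
    rintro S (hS | hS)
    · rcases hS with hS | ⟨δ, hδ, rfl⟩
      · exact hus.clopen S hS
      · exact hCfun1 δ hδ
    · simp only [hVset, mem_iUnion] at hS
      obtain ⟨δ, hδ, i, hi, rfl⟩ := hS
      exact hmyVcl δ i
  set G1 : Set (Set X) := imgCl G0 with hG1
  have hG1fin : G1.Finite := hClFin G0 hG0fin
  have hG1cl : ∀ S ∈ G1, IsClopen S := hClClopen G0 hG0cl
  -- clopen sets capturing `δ''(K ∩ c)` away from `K`
  have hWex : ∀ p : (X ≃ₜ X) × Set X,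
      ∃ W, IsClopen W ∧
        (IsClopen p.2 → (⇑p.1 '' (K ∩ p.2)) ∩ K = ∅ →
          ⇑p.1 '' (K ∩ p.2) ⊆ W ∧ W ⊆ Kᶜ) := by
    rintro ⟨δ, c⟩
    by_cases h : IsClopen c ∧ (⇑δ '' (K ∩ c)) ∩ K = ∅
    · have hsub : ⇑δ '' (K ∩ c) ⊆ Kᶜ := by
        intro z hz
        intro hzK
        have : z ∈ (⇑δ '' (K ∩ c)) ∩ K := ⟨hz, hzK⟩
        rw [h.2] at this
        exact this
      obtain ⟨W, h1, h2, h3⟩ := exists_clopen_between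
        (((hKclosed.inter h.1.1).isCompact).image δ.continuous) hKclosed.isOpen_compl hsub
      exact ⟨W, h1, fun _ _ => ⟨h2, h3⟩⟩
    · exact ⟨∅, isClopen_empty, fun h1 h2 => absurd ⟨h1, h2⟩ h⟩
  choose Wfun hWcl hWspec using hWex
  set Wpre : Set (Set X) :=
    ⋃ δ ∈ Δc, (fun c => ⇑δ ⁻¹' (Wfun (δ, c))) '' (Set.range (cellOf G1)) with hWpre
  have hrangefin : (Set.range (cellOf G1)).Finite :=
    (satAlg_finite hG1fin).subset (range_subset_iff.mpr cellOf_mem_satAlg)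
  set G : Set (Set X) := imgCl (G0 ∪ Wpre) with hGdef
  have hGfin : G.Finite := hClFin _ (hG0fin.union
    (Set.Finite.biUnion hΔfin fun δ _ => hrangefin.image _))
  have hGcl : ∀ S ∈ G, IsClopen S := by
    apply hClClopen
    rintro S (hS | hS)
    · exact hG0cl S hS
    · simp only [hWpre, mem_iUnion] at hS
      obtain ⟨δ, hδ, c, hc, rfl⟩ := hS
      exact (hWcl (δ, c)).preimage δ.continuous
  have hG0G : G0 ⊆ G := (subset_union_left).trans (hsubCl _)
  have hWpreG : Wpre ⊆ G := (subset_union_right).trans (hsubCl _)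
  have hG1G : G1 ⊆ G := hClMono _ _ subset_union_left
  have hGinv : ∀ δ : X ≃ₜ X, δ ∈ Δ → ∀ S ∈ G, ⇑δ '' S ∈ G := fun δ hδ => hClInv _ δ hδ
  have hAG : 𝒜 ⊆ G := fun A hA => hG0G (Or.inl (Or.inl hA))
  have hGinv' : ∀ δ : X ≃ₜ X, δ ∈ Δ → ∀ S ∈ G, ⇑δ.symm '' S ∈ G := by
    intro δ hδ S hS
    exact hGinv δ⁻¹ (inv_mem hδ) S hS
  have hcellim : ∀ δ : X ≃ₜ X, δ ∈ Δ → ∀ x : X, ⇑δ '' cellOf G x = cellOf G (δ x) :=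
    fun δ hδ x => image_cellOf δ (hGinv δ hδ) (hGinv' δ hδ) x
  have hCG0 : ∀ δ : X ≃ₜ X, δ ∈ Δ → Cfun δ ∈ G0 := fun δ hδ => Or.inl (Or.inr ⟨δ, hδ, rfl⟩)
  -- the key combinatorial lemma
  have key : ∀ δ : X ≃ₜ X, δ ∈ Δ → ∀ x : X, (K ∩ cellOf G x).Nonempty →
      (K ∩ ⇑δ '' cellOf G x).Nonempty → K ∩ cellOf G x ⊆ ⇑δ ⁻¹' K := by
    intro δ hδ x ht0 hs0
    by_cases hx : x ∈ Cfun δ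
    · rintro t ⟨htK, htc⟩
      have h1 : t ∈ Cfun δ := (htc (Cfun δ) (hG0G (hCG0 δ hδ))).mpr hx
      have h2 : t ∈ Cfun δ ∩ K := ⟨h1, htK⟩
      rw [hCfun2 δ hδ] at h2
      exact h2.2
    · exfalso
      obtain ⟨t0, ht0K, ht0c⟩ := ht0
      obtain ⟨s0, hs0K, hs0c⟩ := hs0
      have hCG1 : Cfun δ ∈ G1 := hsubCl G0 (hCG0 δ hδ)
      have hbad : (⇑δ '' (K ∩ cellOf G1 x)) ∩ K = ∅ := by
        rw [eq_empty_iff_forall_notMem]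
        rintro z ⟨⟨t, ⟨htK, htc1⟩, rfl⟩, hzK⟩
        have h1 : t ∈ Cfun δ ∩ K := by rw [hCfun2 δ hδ]; exact ⟨htK, hzK⟩
        exact hx ((htc1 (Cfun δ) hCG1).mp h1.1)
      obtain ⟨hW1, hW2⟩ := hWspec (δ, cellOf G1 x) (isClopen_cellOf hG1fin hG1cl x) hbad
      have hPG : ⇑δ ⁻¹' (Wfun (δ, cellOf G1 x)) ∈ G := by
        apply hWpreG
        simp only [hWpre, mem_iUnion]
        exact ⟨δ, hδ, cellOf G1 x, mem_range_self x, rfl⟩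
      have hsub : cellOf G x ⊆ cellOf G1 x := cellOf_anti hG1G x
      have ht0P : t0 ∈ ⇑δ ⁻¹' (Wfun (δ, cellOf G1 x)) := hW1 ⟨t0, ⟨ht0K, hsub ht0c⟩, rfl⟩
      have hxP : x ∈ ⇑δ ⁻¹' (Wfun (δ, cellOf G1 x)) := (ht0c _ hPG).mp ht0P
      obtain ⟨w, hwc, hws⟩ := hs0c
      have hwP : w ∈ ⇑δ ⁻¹' (Wfun (δ, cellOf G1 x)) := (hwc _ hPG).mpr hxP
      rw [Set.mem_preimage, hws] at hwP
      exact (hW2 hwP) hs0K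
  -- the compatibility lemma at the level of cells
  have main : ∀ δ : X ≃ₜ X, δ ∈ Δ → ∀ x : X, (K ∩ cellOf G x).Nonempty →
      (K ∩ cellOf G (δ x)).Nonempty →
      ⇑δ '' (K ∩ cellOf G x) = K ∩ cellOf G (δ x) := by
    intro δ hδ x h1 h2
    have himg := hcellim δ hδ x
    have h2' : (K ∩ ⇑δ '' cellOf G x).Nonempty := by rw [himg]; exact h2
    have hfwd : K ∩ cellOf G x ⊆ ⇑δ ⁻¹' K := key δ hδ x h1 h2'
    have hinvmem : (δ⁻¹ : X ≃ₜ X) ∈ Δ := inv_mem hδ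
    have himg' : ⇑(δ⁻¹ : X ≃ₜ X) '' cellOf G (δ x) = cellOf G x := by
      rw [hcellim δ⁻¹ hinvmem (δ x)]
      show cellOf G (δ.symm (δ x)) = cellOf G x
      rw [δ.symm_apply_apply]
    have h1' : (K ∩ ⇑(δ⁻¹ : X ≃ₜ X) '' cellOf G (δ x)).Nonempty := by rw [himg']; exact h1
    have hbwd : K ∩ cellOf G (δ x) ⊆ ⇑(δ⁻¹ : X ≃ₜ X) ⁻¹' K :=
      key δ⁻¹ hinvmem (δ x) h2 h1'
    apply subset_antisymm
    · rintro _ ⟨t, ⟨htK, htc⟩, rfl⟩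
      exact ⟨hfwd ⟨htK, htc⟩, himg ▸ mem_image_of_mem _ htc⟩
    · rintro z ⟨hzK, hzc⟩
      have hz' : δ.symm z ∈ K := hbwd ⟨hzK, hzc⟩
      have hz'' : δ.symm z ∈ cellOf G x := by
        rw [← himg']; exact mem_image_of_mem _ hzc
      exact ⟨δ.symm z, ⟨hz', hz''⟩, δ.apply_symm_apply z⟩
  refine ⟨satAlg G, pieceGroup Δ G hGinv, ?_, satAlg_finite hGfin, ?_, ?_, ?_, ?_⟩
  · constructor
    · exact fun A hA => isClopen_of_mem_satAlg hGfin hGcl hA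
    · exact empty_mem_satAlg
    · exact fun A hA => compl_mem_satAlg hA
    · exact fun A hA B hB => inter_mem_satAlg hA hB
    · -- maps
      intro δ' hδ' A hA
      apply satAlg_of_forall
      rintro z w hw hz
      obtain ⟨a, ha, rfl⟩ := hz
      obtain ⟨δ, hδ, heq⟩ := hδ' a
      have hza : ⇑δ' a = ⇑δ a := heq (mem_cellOf_self a)
      rw [hza, ← hcellim δ hδ a] at hw
      obtain ⟨b, hb, rfl⟩ := hw
      exact ⟨b, (hA a b hb).mp ha, heq hb⟩
    · -- eval_injective
      intro δ' hδ' hfixes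
      refine Homeomorph.ext fun x => ?_
      show δ' x = x
      obtain ⟨δ, hδ, heq⟩ := hδ' x
      have hcellfix : ⇑δ' '' cellOf G x = cellOf G x := hfixes _ (cellOf_mem_satAlg x)
      have hc2 : cellOf G (δ x) = cellOf G x := by
        rw [← hcellim δ hδ x, ← Set.image_congr heq]
        exact hcellfix
      rw [heq (mem_cellOf_self x)]
      by_contra hne'
      have hxcov : x ∈ ⋃ i ∈ tfun δ, myV δ i := htfun δ hδ hne'
      simp only [mem_iUnion] at hxcov
      obtain ⟨i, hi, hxV⟩ := hxcov
      have hVG : myV δ i ∈ G := hG0G (Or.inr (by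
        simp only [hVset, mem_iUnion]
        exact ⟨δ, hδ, i, hi, rfl⟩))
      have hcellV : cellOf G x ⊆ myV δ i := cell_subset_of_mem hVG hxV
      have hmem : x ∈ (⇑δ '' myV δ i) ∩ myV δ i := by
        refine ⟨?_, hxV⟩
        have h3 : x ∈ cellOf G (δ x) := hc2 ▸ mem_cellOf_self x
        rw [← hcellim δ hδ x] at h3
        exact image_mono hcellV h3
      rw [hmyVdisj δ i] at hmem
      exact hmem
    · -- fixed_mem
      intro δ' hδ'
      apply satAlg_of_forall
      intro z w hw hz
      obtain ⟨δ, hδ, heq⟩ := hδ' z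
      have hδz : δ z = z := by rw [← heq (mem_cellOf_self z)]; exact hz
      have hFixG : {y : X | δ y = y} ∈ G := hAG (hus.fixed_mem δ hδ)
      have hwFix : δ w = w := (hw _ hFixG).mpr hδz
      show ⇑δ' w = w
      rw [heq hw]
      exact hwFix
    · -- full
      rintro g ⟨n, U, γ, hU, hγ, hdisj, hcover, heqg⟩
      intro x
      have hx : x ∈ ⋃ i, U i := hcover ▸ mem_univ x
      obtain ⟨i, hxU⟩ := mem_iUnion.mp hx
      obtain ⟨δ, hδ, heq⟩ := hγ i x
      refine ⟨δ, hδ, fun y hy => ?_⟩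
      have hyU : y ∈ U i := cell_subset (hU i) hxU hy
      rw [heqg i y hyU]
      exact heq hy
  · -- K-compatible
    intro A B hA hB δ' hδ' himgAB hKA hKB
    obtain ⟨x, hxK, hxA⟩ := hKA
    have hAx : A = cellOf G x := atom_eq_cell hA hxA
    subst hAx
    obtain ⟨δ, hδ, heq⟩ := hδ' x
    have himg2 : ⇑δ' '' cellOf G x = ⇑δ '' cellOf G x := Set.image_congr heq
    have hBx : B = cellOf G (δ x) := by rw [← himgAB, himg2, hcellim δ hδ x]
    rw [hBx] at hKB
    have hmain := main δ hδ x ⟨x, hxK, mem_cellOf_self x⟩ hKB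
    rw [hBx, ← hmain]
    exact Set.image_congr fun a ha => heq ha.2
  · -- 𝒜 ⊆ 𝒜'
    exact fun A hA => subset_satAlg (hAG hA)
  · -- Δ ≤ Δ'
    intro δ hδ
    exact fun x => ⟨δ, hδ, fun y _ => rfl⟩
  · -- Δ' ≤ Γ
    intro g hg
    apply hample.2.2.1
    have hcellsfin : (Set.range (cellOf G)).Finite :=
      (satAlg_finite hGfin).subset (range_subset_iff.mpr cellOf_mem_satAlg)
    haveI := hcellsfin.fintype
    set n := Fintype.card ↥(Set.range (cellOf G)) with hn
    set e : ↥(Set.range (cellOf G)) ≃ Fin n := Fintype.equivFin _ with he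
    have hpiece : ∀ i : Fin n, ∃ δ : X ≃ₜ X, δ ∈ Γ ∧
        ∀ y ∈ ((e.symm i : ↥(Set.range (cellOf G))) : Set X), g y = δ y := by
      intro i
      obtain ⟨x, hx⟩ := (e.symm i).2
      obtain ⟨δ, hδ, heq⟩ := hg x
      exact ⟨δ, hΔΓ hδ, fun y hy => heq (by rw [hx]; exact hy)⟩
    choose γfun hγ1 hγ2 using hpiece
    refine ⟨n, fun i => ((e.symm i : ↥(Set.range (cellOf G))) : Set X), γfun, ?_, hγ1, ?_, ?_,
      hγ2⟩
    · intro i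
      show IsClopen ((e.symm i : ↥(Set.range (cellOf G))) : Set X)
      obtain ⟨x, hx⟩ := (e.symm i).2
      rw [← hx]
      exact isClopen_cellOf hGfin hGcl x
    · intro i j hij
      show Disjoint ((e.symm i : ↥(Set.range (cellOf G))) : Set X)
        ((e.symm j : ↥(Set.range (cellOf G))) : Set X)
      refine Set.disjoint_left.mpr fun {z} hzi hzj => absurd ?_ hij
      obtain ⟨x, hx⟩ := (e.symm i).2
      obtain ⟨y, hy⟩ := (e.symm j).2
      have hzi' : z ∈ cellOf G x := by rw [hx]; exact hzi
      have hzj' : z ∈ cellOf G y := by rw [hy]; exact hzj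
      apply e.symm.injective
      apply Subtype.ext
      show ((e.symm i : ↥(Set.range (cellOf G))) : Set X)
        = ((e.symm j : ↥(Set.range (cellOf G))) : Set X)
      rw [← hx, ← hy, ← cellOf_eq hzi', ← cellOf_eq hzj']
    · apply eq_univ_iff_forall.mpr
      intro x
      refine mem_iUnion.mpr ⟨e ⟨cellOf G x, mem_range_self x⟩, ?_⟩
      show x ∈ ((e.symm (e ⟨cellOf G x, mem_range_self x⟩) : ↥(Set.range (cellOf G))) : Set X)
      rw [e.symm_apply_apply]
      exact mem_cellOf_self x
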